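/- arXiv:1907.04754 — 2 statements merged into one kernel-verified Lean document; each statement's English description precedes it below -/
import Mathlib

section
/- Let q ≥ 1 be a real number, let 0 < t < 1, and let f : ℂ → ℂ be complex-differentiable on the open unit disk {z ∈ ℂ : |z| < 1}. Then (π/(2q−1)) · (1 − (1−t²)^(2q−1)) · |f(0)|^q ≤ ∫_{|z|<t} |f(z)|^q · (1−|z|²)^(2q−2) dA(z), where dA denotes Lebesgue measure on ℂ and all powers are real powers. -/
open MeasureTheory Real Set Metric

private lemma submean_aux (q : ℝ) (hq : 1 ≤ q) (f : ℂ → ℂ)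
    (hf : DifferentiableOn ℂ f (ball (0:ℂ) 1)) (r : ℝ) (hr : 0 < r) (hr1 : r < 1) :
    (2*π) * ‖f 0‖ ^ q ≤ ∫ θ in Ioo (-π) π, ‖f (circleMap 0 r θ)‖ ^ q := by
  -- mean value
  have hmv0 : (∫ θ in (0:ℝ)..(2*π), f (circleMap 0 r θ)) = (2*π : ℂ) * f 0 := by
    have hsub : closure (ball (0:ℂ) r) ⊆ ball (0:ℂ) 1 := by
      rw [closure_ball (0:ℂ) hr.ne']
      exact closedBall_subset_ball hr1
    have hd : DiffContOnCl ℂ f (ball (0:ℂ) r) :=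
      ⟨hf.mono (ball_subset_ball hr1.le), (hf.continuousOn).mono hsub⟩
    have h := hd.circleIntegral_sub_inv_smul (mem_ball_self hr)
    rw [circleIntegral] at h
    simp only [sub_zero, deriv_circleMap, smul_eq_mul] at h
    have h2 : ∀ θ : ℝ, circleMap 0 r θ * Complex.I * ((circleMap 0 r θ)⁻¹ * f (circleMap 0 r θ))
        = Complex.I * f (circleMap 0 r θ) := by
      intro θ
      have : circleMap 0 r θ ≠ 0 := circleMap_ne_center hr.ne'
      field_simp
    simp only [h2] at h
    rw [intervalIntegral.integral_const_mul] at h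
    apply mul_left_cancel₀ Complex.I_ne_zero
    rw [h]; ring
  have h2π : (0:ℝ) < 2*π := by positivity
  have hmv : (2*π) * ‖f 0‖ ≤ ∫ θ in Ioc (0:ℝ) (2*π), ‖f (circleMap 0 r θ)‖ := by
    have := intervalIntegral.norm_integral_le_integral_norm (a := 0) (b := 2*π)
      (f := fun θ => f (circleMap 0 r θ)) (μ := volume) h2π.le
    rw [hmv0] at this
    simp only [norm_mul] at this
    rw [intervalIntegral.integral_of_le h2π.le] at this
    calc 2*π * ‖f 0‖
        = ‖(2:ℂ)‖ * ‖(π:ℂ)‖ * ‖f 0‖ := by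
          simp [abs_of_pos pi_pos]
      _ ≤ _ := this
  -- Jensen on Ioc 0 2π
  set μ := volume.restrict (Ioc (0:ℝ) (2*π))
  have hμu : μ univ = ENNReal.ofReal (2*π) := by
    simp [μ, Measure.restrict_apply, Real.volume_Ioc]
  haveI : IsFiniteMeasure μ := ⟨by rw [hμu]; exact ENNReal.ofReal_lt_top⟩
  haveI : NeZero μ := ⟨by
    intro h0
    have := hμu
    rw [h0] at this
    simp at this
    exact absurd this (not_le.2 (by positivity))⟩
  have hcont : Continuous fun θ : ℝ => ‖f (circleMap 0 r θ)‖ := by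
    have : Continuous fun θ : ℝ => f (circleMap 0 r θ) := by
      apply hf.continuousOn.comp_continuous (continuous_circleMap 0 r)
      intro θ
      simp [mem_ball, circleMap, abs_of_pos hr, hr1]
    exact continuous_norm.comp this
  have hint1 : Integrable (fun θ : ℝ => ‖f (circleMap 0 r θ)‖) μ :=
    hcont.integrableOn_Ioc
  have hint2 : Integrable (fun θ : ℝ => ‖f (circleMap 0 r θ)‖ ^ q) μ :=
    (hcont.rpow_const (fun x => Or.inr (by linarith))).integrableOn_Ioc
  have hjen := (convexOn_rpow hq).map_average_le
    (f := fun θ : ℝ => ‖f (circleMap 0 r θ)‖) (μ := μ)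
    (continuousOn_id.rpow_const fun x hx => Or.inr (by linarith)) isClosed_Ici
    (Filter.Eventually.of_forall fun θ => norm_nonneg _) hint1 hint2
  have havg : ∀ g : ℝ → ℝ, ⨍ x, g x ∂μ = (2*π)⁻¹ * ∫ x, g x ∂μ := by
    intro g
    rw [average_eq, measureReal_def, hμu, ENNReal.toReal_ofReal h2π.le, smul_eq_mul]
  rw [havg, havg] at hjen
  have h1 : ‖f 0‖ ≤ (2*π)⁻¹ * ∫ x, ‖f (circleMap 0 r x)‖ ∂μ := by
    rw [← mul_le_mul_iff_right₀ h2π, ← mul_assoc, mul_inv_cancel₀ h2π.ne', one_mul]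
    exact hmv
  have h3 : ‖f 0‖ ^ q ≤ (2*π)⁻¹ * ∫ x, ‖f (circleMap 0 r x)‖ ^ q ∂μ :=
    le_trans (by exact Real.rpow_le_rpow (norm_nonneg _) h1 (by linarith)) hjen
  have key : 2*π * ‖f 0‖ ^ q
      ≤ ∫ x in Ioc (0:ℝ) (2*π), ‖f (circleMap 0 r x)‖ ^ q := by
    calc 2*π * ‖f 0‖ ^ q
        ≤ 2*π * ((2*π)⁻¹ * ∫ x, ‖f (circleMap 0 r x)‖ ^ q ∂μ) :=
          mul_le_mul_of_nonneg_left h3 h2π.le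
      _ = ∫ x, ‖f (circleMap 0 r x)‖ ^ q ∂μ := by
          rw [← mul_assoc, mul_inv_cancel₀ h2π.ne', one_mul]
  -- shift interval by periodicity
  have hper : Function.Periodic (fun θ : ℝ => ‖f (circleMap 0 r θ)‖ ^ q) (2*π) :=
    fun θ => by simp [(periodic_circleMap 0 r) θ]
  have hshift := hper.intervalIntegral_add_eq (-π) 0
  rw [zero_add] at hshift
  have : (-π) + 2*π = π := by ring
  rw [this] at hshift
  rw [← intervalIntegral.integral_of_le h2π.le, ← hshift,
    intervalIntegral.integral_of_le (by linarith [pi_pos] : -π ≤ π),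
    integral_Ioc_eq_integral_Ioo] at key
  exact key

private lemma weight_integral (q t : ℝ) (hq : 1 ≤ q) (ht0 : 0 < t) (ht1 : t < 1) :
    ∫ r in Ioo (0:ℝ) t, r * (1 - r ^ 2) ^ (2*q-2)
      = (1 - (1 - t ^ 2) ^ (2*q-1)) / (2*(2*q-1)) := by
  have hq1 : (0:ℝ) < 2*q-1 := by linarith
  set F : ℝ → ℝ := fun r => -(1 - r ^ 2) ^ (2*q-1) / (2*(2*q-1)) with hF
  have hderiv : ∀ r ∈ uIcc (0:ℝ) t, HasDerivAt F (r * (1 - r ^ 2) ^ (2*q-2)) r := by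
    intro r hr
    rw [uIcc_of_le ht0.le] at hr
    have hbase : 0 < 1 - r ^ 2 := by
      have h1 : |r| < 1 := by
        rw [abs_lt]; constructor <;> nlinarith [hr.1, hr.2]
      nlinarith [abs_nonneg r, sq_abs r]
    have hu : HasDerivAt (fun x : ℝ => 1 - x ^ 2) (-(2*r)) r := by
      simpa using ((hasDerivAt_pow 2 r).const_sub 1)
    have hrpow := (Real.hasDerivAt_rpow_const (x := 1 - r ^ 2) (p := 2*q-1)
      (Or.inl hbase.ne')).comp r hu
    have : HasDerivAt (fun x : ℝ => (1 - x ^ 2) ^ (2*q-1))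
        ((2*q-1) * (1 - r ^ 2) ^ (2*q-1-1) * (-(2*r))) r := hrpow
    have h2 := (this.neg).div_const (2*(2*q-1))
    refine h2.congr_deriv ?_
    have : 2*q-1-1 = 2*q-2 := by ring
    rw [this]
    field_simp
  have hconti : IntervalIntegrable (fun r : ℝ => r * (1 - r ^ 2) ^ (2*q-2)) volume 0 t := by
    apply ContinuousOn.intervalIntegrable
    apply continuousOn_id.mul
    apply ContinuousOn.rpow_const
    · fun_prop
    · intro x hx
      rw [uIcc_of_le ht0.le] at hx
      left
      have h1 : |x| < 1 := by rw [abs_lt]; constructor <;> nlinarith [hx.1, hx.2]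
      nlinarith [abs_nonneg x, sq_abs x]
  have := intervalIntegral.integral_eq_sub_of_hasDerivAt hderiv hconti
  rw [intervalIntegral.integral_of_le ht0.le, integral_Ioc_eq_integral_Ioo] at this
  rw [this, hF]
  simp only []
  rw [show ((1:ℝ) - 0 ^ 2) = 1 by norm_num, Real.one_rpow]
  ring

/-- Explicit Poincaré-disk form of the pointwise bound of a holomorphic function
by its weighted `L^q` integral on a disk of radius `t < 1`. -/
theorem pointwise_bound_holomorphic_disk
    (q t : ℝ) (hq : 1 ≤ q) (ht0 : 0 < t) (ht1 : t < 1)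
    (f : ℂ → ℂ) (hf : DifferentiableOn ℂ f (Metric.ball (0 : ℂ) 1)) :
    (Real.pi / (2 * q - 1)) * (1 - (1 - t ^ 2) ^ (2 * q - 1)) * ‖f 0‖ ^ q
      ≤ ∫ z in Metric.ball (0 : ℂ) t,
          ‖f z‖ ^ q * (1 - ‖z‖ ^ 2) ^ (2 * q - 2) ∂volume := by
  have hq1 : (0:ℝ) < 2*q-1 := by linarith
  set g : ℂ → ℝ := fun z => ‖f z‖ ^ q * (1 - ‖z‖ ^ 2) ^ (2*q-2) with hg
  set S : Set (ℝ × ℝ) := Ioo (0:ℝ) t ×ˢ Ioo (-π) π with hS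
  set F : ℝ × ℝ → ℝ := fun p => p.1 * g (Complex.polarCoord.symm p) with hFdef
  have hsymm_cont : Continuous fun p : ℝ × ℝ => Complex.polarCoord.symm p := by
    simp only [Complex.polarCoord_symm_apply]
    fun_prop
  -- Step A : polar change of variables
  have stepA : (∫ z in ball (0:ℂ) t, g z) = ∫ p in S, F p := by
    rw [← integral_indicator measurableSet_ball,
      ← Complex.integral_comp_polarCoord_symm (fun z => (ball (0:ℂ) t).indicator g z)]
    have hA : MeasurableSet (Complex.polarCoord.symm ⁻¹' ball (0:ℂ) t) :=
      (isOpen_ball.preimage hsymm_cont).measurableSet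
    have e1 : ∀ p : ℝ × ℝ, p.1 • (ball (0:ℂ) t).indicator g (Complex.polarCoord.symm p)
        = (Complex.polarCoord.symm ⁻¹' ball (0:ℂ) t).indicator F p := by
      intro p
      by_cases h : Complex.polarCoord.symm p ∈ ball (0:ℂ) t
      · rw [Set.indicator_of_mem h, Set.indicator_of_mem (Set.mem_preimage.mpr h), smul_eq_mul]
      · rw [Set.indicator_of_notMem h, Set.indicator_of_notMem
          (fun hc => h (Set.mem_preimage.mp hc)), smul_zero]
    simp only [e1]
    have hsets : polarCoord.target ∩ (Complex.polarCoord.symm ⁻¹' ball (0:ℂ) t) = S := by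
      rw [show polarCoord.target = Ioi (0:ℝ) ×ˢ Ioo (-π) π from rfl]
      ext p
      simp only [mem_inter_iff, mem_preimage, mem_ball, mem_prod, mem_Ioi, mem_Ioo, hS,
        Complex.dist_eq, sub_zero, Complex.norm_polarCoord_symm]
      constructor
      · rintro ⟨⟨h1, h2⟩, h3⟩
        exact ⟨⟨h1, by rwa [abs_of_pos h1] at h3⟩, h2⟩
      · rintro ⟨⟨h1, h2⟩, h3⟩
        exact ⟨⟨h1, h3⟩, by rwa [abs_of_pos h1]⟩
    rw [setIntegral_indicator hA, hsets]
  -- continuity of g on closedBall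
  have hcb : closedBall (0:ℂ) t ⊆ ball (0:ℂ) 1 := closedBall_subset_ball ht1
  have hgc : ContinuousOn g (closedBall (0:ℂ) t) := by
    apply ContinuousOn.mul
    · exact ((continuous_norm.comp_continuousOn
        (hf.continuousOn.mono hcb)).rpow_const fun x hx => Or.inr (by linarith))
    · apply ContinuousOn.rpow_const
      · exact (continuous_const.sub (continuous_norm.pow 2)).continuousOn
      · intro z hz
        left
        have : ‖z‖ ≤ t := by
          simpa [Complex.dist_eq] using mem_closedBall.1 hz
        nlinarith [norm_nonneg z]
  -- integrability of F on S
  have hK : IsCompact (Icc (0:ℝ) t ×ˢ Icc (-π) π) := isCompact_Icc.prod isCompact_Icc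
  have hmaps : ∀ p ∈ Icc (0:ℝ) t ×ˢ Icc (-π) π,
      Complex.polarCoord.symm p ∈ closedBall (0:ℂ) t := by
    rintro ⟨r, θ⟩ ⟨hr, -⟩
    simp only [mem_closedBall, Complex.dist_eq, sub_zero, Complex.norm_polarCoord_symm]
    rw [abs_of_nonneg hr.1]
    exact hr.2
  have hFc : ContinuousOn F (Icc (0:ℝ) t ×ˢ Icc (-π) π) :=
    continuousOn_fst.mul (hgc.comp hsymm_cont.continuousOn hmaps)
  have hInt : IntegrableOn F S := by
    exact (hFc.integrableOn_compact hK).mono_set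
      (Set.prod_mono Ioo_subset_Icc_self Ioo_subset_Icc_self)
  -- Fubini
  have hInt' : Integrable F (((volume : Measure ℝ).restrict (Ioo (0:ℝ) t)).prod
      ((volume : Measure ℝ).restrict (Ioo (-π) π))) := by
    rwa [Measure.prod_restrict, ← hS, ← Measure.volume_eq_prod]
  have stepC : (∫ p in S, F p) = ∫ r in Ioo (0:ℝ) t, ∫ θ in Ioo (-π) π, F (r, θ) := by
    rw [hS, Measure.volume_eq_prod]
    exact setIntegral_prod F (by rwa [hS, Measure.volume_eq_prod] at hInt)
  -- identify F with circleMap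
  have hsymm_eq : ∀ r θ : ℝ, Complex.polarCoord.symm (r, θ) = circleMap 0 r θ := by
    intro r θ
    rw [Complex.polarCoord_symm_apply, circleMap]
    push_cast
    rw [Complex.exp_mul_I]
    ring
  have hFval : ∀ r ∈ Ioo (0:ℝ) t, ∀ θ : ℝ,
      F (r, θ) = (r * (1 - r ^ 2) ^ (2*q-2)) * ‖f (circleMap 0 r θ)‖ ^ q := by
    intro r hr θ
    have habs : ‖circleMap 0 r θ‖ = r := by
      rw [norm_circleMap_zero, abs_of_pos hr.1]
    rw [hFdef]
    simp only [hg, hsymm_eq r θ, habs]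
    ring
  -- inner bound
  have hinner : ∀ r ∈ Ioo (0:ℝ) t,
      2*π * ‖f 0‖ ^ q * (r * (1 - r ^ 2) ^ (2*q-2))
        ≤ ∫ θ in Ioo (-π) π, F (r, θ) := by
    intro r hr
    have hr1 : r < 1 := hr.2.trans ht1
    have hsm := submean_aux q hq f hf r hr.1 hr1
    calc 2*π * ‖f 0‖ ^ q * (r * (1 - r ^ 2) ^ (2*q-2))
        ≤ (∫ θ in Ioo (-π) π, ‖f (circleMap 0 r θ)‖ ^ q)
            * (r * (1 - r ^ 2) ^ (2*q-2)) := by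
          apply mul_le_mul_of_nonneg_right hsm
          have h1 : (0:ℝ) < 1 - r ^ 2 := by nlinarith [hr.1, hr1]
          have hr0 : (0:ℝ) < r := hr.1
          positivity
      _ = ∫ θ in Ioo (-π) π, F (r, θ) := by
          rw [← integral_mul_const]
          apply setIntegral_congr_fun measurableSet_Ioo
          intro θ _
          simp only []
          rw [hFval r hr θ]
          ring
  -- outer bound
  have hIntInner : IntegrableOn (fun r => ∫ θ in Ioo (-π) π, F (r, θ)) (Ioo (0:ℝ) t) :=
    hInt'.integral_prod_left
  have hIntLow : IntegrableOn
      (fun r => 2*π * ‖f 0‖ ^ q * (r * (1 - r ^ 2) ^ (2*q-2))) (Ioo (0:ℝ) t) := by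
    apply Integrable.const_mul
    apply (ContinuousOn.integrableOn_compact isCompact_Icc ?_).mono_set Ioo_subset_Icc_self
    apply continuousOn_id.mul
    apply ContinuousOn.rpow_const
    · fun_prop
    · intro x hx
      left
      have h1 : |x| < 1 := by
        rw [abs_lt]; constructor <;> nlinarith [hx.1, hx.2]
      nlinarith [abs_nonneg x, sq_abs x]
  have stepE : (∫ r in Ioo (0:ℝ) t, 2*π * ‖f 0‖ ^ q * (r * (1 - r ^ 2) ^ (2*q-2)))
      ≤ ∫ r in Ioo (0:ℝ) t, ∫ θ in Ioo (-π) π, F (r, θ) :=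
    setIntegral_mono_on hIntLow hIntInner measurableSet_Ioo hinner
  -- conclude
  have hW := weight_integral q t hq ht0 ht1
  have hlhs : (∫ r in Ioo (0:ℝ) t, 2*π * ‖f 0‖ ^ q * (r * (1 - r ^ 2) ^ (2*q-2)))
      = 2*π * ‖f 0‖ ^ q * ((1 - (1 - t ^ 2) ^ (2*q-1)) / (2*(2*q-1))) := by
    rw [integral_const_mul, hW]
  have := stepE.trans_eq' hlhs
  rw [stepA, stepC]
  refine le_trans (le_of_eq ?_) this
  field_simp
end

section
/- Let K := (1/2)·√(24π)·√((3/π) · (cosh((ln 3)/4))⁶ / ((cosh((ln 3)/4))⁶ − 1) · ((ln 3)/2) · arccos(−sinh((ln 3)/2))). Then 7.345 < K/√2 < 7.346. -/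
open Real

private lemma sqrt3_bounds : 1.7320508 < Real.sqrt 3 ∧ Real.sqrt 3 < 1.7320509 := by
  constructor
  · exact (Real.lt_sqrt (by norm_num)).2 (by norm_num)
  · exact (Real.sqrt_lt' (by norm_num)).2 (by norm_num)

private lemma log3_ub : Real.log 3 < 1.098613 := by
  rw [Real.log_lt_iff_lt_exp (by norm_num)]
  have hx : |(0.5493065 : ℝ)| ≤ 1 := by
    rw [abs_of_nonneg (by norm_num : (0:ℝ) ≤ 0.5493065)]; norm_num
  have h := Real.exp_bound hx (n := 10) (by norm_num)
  rw [abs_of_nonneg (by norm_num : (0:ℝ) ≤ 0.5493065)] at h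
  have h1 := (abs_le.1 h).1
  simp only [Finset.sum_range_succ, Finset.sum_range_zero, Nat.factorial] at h1
  norm_num at h1
  rw [show (1.098613 : ℝ) = 0.5493065 + 0.5493065 by norm_num, Real.exp_add]
  nlinarith [Real.exp_pos (0.5493065 : ℝ), h1]

private lemma log3_lb : 1.098612 < Real.log 3 := by
  rw [Real.lt_log_iff_exp_lt (by norm_num)]
  have hx : |(0.549306 : ℝ)| ≤ 1 := by
    rw [abs_of_nonneg (by norm_num : (0:ℝ) ≤ 0.549306)]; norm_num
  have h := Real.exp_bound hx (n := 10) (by norm_num)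
  rw [abs_of_nonneg (by norm_num : (0:ℝ) ≤ 0.549306)] at h
  have h1 := (abs_le.1 h).2
  simp only [Finset.sum_range_succ, Finset.sum_range_zero, Nat.factorial] at h1
  norm_num at h1
  rw [show (1.098612 : ℝ) = 0.549306 + 0.549306 by norm_num, Real.exp_add]
  nlinarith [Real.exp_pos (0.549306 : ℝ), h1]

set_option maxHeartbeats 1000000 in
private lemma theta_ub : Real.arccos (-(Real.sqrt 3)⁻¹) < 2.18632 := by
  obtain ⟨hs1, hs2⟩ := sqrt3_bounds
  have hs0 : (0:ℝ) < Real.sqrt 3 := by linarith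
  have hsq3 : Real.sqrt 3 ^ 2 = 3 := Real.sq_sqrt (by norm_num)
  have hmul3 : Real.sqrt 3 * Real.sqrt 3 = 3 := by linear_combination hsq3
  have hinv : (Real.sqrt 3)⁻¹ = Real.sqrt 3 / 3 := by
    rw [eq_div_iff (by norm_num : (3:ℝ) ≠ 0), inv_mul_eq_div, div_eq_iff hs0.ne']
    linarith [hmul3]
  have hπ1 := Real.pi_gt_d6
  have hπ2 := Real.pi_lt_d6
  set e : ℝ := 2 * Real.pi / 3 - 2.18632 with hedef
  clear_value e
  have he1 : -0.091926 < e := by rw [hedef]; linarith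
  have he2 : e < -0.091924 := by rw [hedef]; linarith
  have habs : |e| ≤ 1 := by rw [abs_le]; constructor <;> linarith
  have hcb := abs_le.1 (Real.cos_bound habs)
  have hsb := abs_le.1 (Real.sin_bound habs)
  have habs4 : |e| ^ 4 = e ^ 4 := by rw [← abs_pow, abs_of_nonneg (by positivity)]
  rw [habs4] at hcb
  have habs5 : |e| ^ 5 ≤ e ^ 4 := by
    rw [← habs4]
    have := abs_nonneg e
    calc |e| ^ 5 = |e| ^ 4 * |e| := by ring
      _ ≤ |e| ^ 4 * 1 := by gcongr
      _ = |e| ^ 4 := by ring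
  have hsq : e ^ 2 < 0.0084504 := by
    linarith [mul_pos (show (0:ℝ) < e + 0.091926 by linarith)
      (show (0:ℝ) < -0.091924 - e by linarith)]
  have h4 : e ^ 4 < 0.0000715 := by
    linarith [mul_pos (show (0:ℝ) < 0.0084504 - e ^ 2 by linarith)
      (show (0:ℝ) < 0.0084504 + e ^ 2 by positivity)]
  have hce : 0.995771 < Real.cos e := by linarith [hcb.1]
  have he3 : -0.0007769 < e ^ 3 := by
    linarith [mul_pos (show (0:ℝ) < -e by linarith)
      (show (0:ℝ) < 0.0084504 - e ^ 2 by linarith)]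
  have hse : Real.sin e < -0.0917907 := by linarith [hsb.2, habs5]
  have hkey : Real.cos 2.18632 < -(Real.sqrt 3)⁻¹ := by
    have hid : (2.18632 : ℝ) = Real.pi - (Real.pi / 3 + e) := by rw [hedef]; ring
    rw [hid, Real.cos_pi_sub, Real.cos_add, Real.cos_pi_div_three, Real.sin_pi_div_three, hinv]
    have hp : Real.sqrt 3 * Real.sin e < Real.sqrt 3 * -0.0917907 :=
      mul_lt_mul_of_pos_left hse hs0
    linarith [hp, hce, hs1, hs2]
  by_contra hcon
  push_neg at hcon
  have hinv1 : (-1:ℝ) ≤ -(Real.sqrt 3)⁻¹ := by rw [hinv]; nlinarith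
  have hinv2 : -(Real.sqrt 3)⁻¹ ≤ 1 := by rw [hinv]; nlinarith
  have h1 := Real.cos_le_cos_of_nonneg_of_le_pi (by norm_num : (0:ℝ) ≤ 2.18632)
    (Real.arccos_le_pi _) hcon
  rw [Real.cos_arccos hinv1 hinv2] at h1
  linarith

set_option maxHeartbeats 1000000 in
private lemma theta_lb : 2.18620 < Real.arccos (-(Real.sqrt 3)⁻¹) := by
  obtain ⟨hs1, hs2⟩ := sqrt3_bounds
  have hs0 : (0:ℝ) < Real.sqrt 3 := by linarith
  have hsq3 : Real.sqrt 3 ^ 2 = 3 := Real.sq_sqrt (by norm_num)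
  have hmul3 : Real.sqrt 3 * Real.sqrt 3 = 3 := by linear_combination hsq3
  have hinv : (Real.sqrt 3)⁻¹ = Real.sqrt 3 / 3 := by
    rw [eq_div_iff (by norm_num : (3:ℝ) ≠ 0), inv_mul_eq_div, div_eq_iff hs0.ne']
    linarith [hmul3]
  have hπ1 := Real.pi_gt_d6
  have hπ2 := Real.pi_lt_d6
  set e : ℝ := 2 * Real.pi / 3 - 2.18620 with hedef
  clear_value e
  have he1 : -0.091806 < e := by rw [hedef]; linarith
  have he2 : e < -0.091804 := by rw [hedef]; linarith
  have habs : |e| ≤ 1 := by rw [abs_le]; constructor <;> linarith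
  have hcb := abs_le.1 (Real.cos_bound habs)
  have hsb := abs_le.1 (Real.sin_bound habs)
  have habs4 : |e| ^ 4 = e ^ 4 := by rw [← abs_pow, abs_of_nonneg (by positivity)]
  rw [habs4] at hcb
  have habs5 : |e| ^ 5 ≤ e ^ 4 := by
    rw [← habs4]
    have := abs_nonneg e
    calc |e| ^ 5 = |e| ^ 4 * |e| := by ring
      _ ≤ |e| ^ 4 * 1 := by gcongr
      _ = |e| ^ 4 := by ring
  have hsq : e ^ 2 < 0.0084284 := by
    linarith [mul_pos (show (0:ℝ) < e + 0.091806 by linarith)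
      (show (0:ℝ) < -0.091804 - e by linarith)]
  have hsqlo : 0.0084279 < e ^ 2 := by
    linarith [mul_pos (show (0:ℝ) < -e - 0.091804 by linarith)
      (show (0:ℝ) < -e + 0.091804 by linarith)]
  have h4 : e ^ 4 < 0.0000711 := by
    linarith [mul_pos (show (0:ℝ) < 0.0084284 - e ^ 2 by linarith)
      (show (0:ℝ) < 0.0084284 + e ^ 2 by positivity)]
  have hch : Real.cos e < 0.99579 := by linarith [hcb.2]
  have he3 : e ^ 3 < -0.0007737 := by
    linarith [mul_pos (show (0:ℝ) < -e by linarith)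
      (show (0:ℝ) < e ^ 2 - 0.0084279 by linarith)]
  have hsl : -0.091681 < Real.sin e := by linarith [hsb.1, habs5]
  have hkey : -(Real.sqrt 3)⁻¹ < Real.cos 2.18620 := by
    have hid : (2.18620 : ℝ) = Real.pi - (Real.pi / 3 + e) := by rw [hedef]; ring
    rw [hid, Real.cos_pi_sub, Real.cos_add, Real.cos_pi_div_three, Real.sin_pi_div_three, hinv]
    have hp : Real.sqrt 3 * -0.091681 < Real.sqrt 3 * Real.sin e :=
      mul_lt_mul_of_pos_left (by linarith : (-0.091681:ℝ) < Real.sin e) hs0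
    linarith [hp, hch, hs1, hs2]
  by_contra hcon
  push_neg at hcon
  have hinv1 : (-1:ℝ) ≤ -(Real.sqrt 3)⁻¹ := by rw [hinv]; nlinarith
  have hinv2 : -(Real.sqrt 3)⁻¹ ≤ 1 := by rw [hinv]; nlinarith
  have h1 := Real.cos_le_cos_of_nonneg_of_le_pi (Real.arccos_nonneg _)
    (show (2.18620:ℝ) ≤ Real.pi by linarith) hcon
  rw [Real.cos_arccos hinv1 hinv2] at h1
  linarith

private lemma combine_sqrt (x : ℝ) (hx : 0 ≤ x) :
    (1 / 2) * Real.sqrt (24 * Real.pi) * Real.sqrt x / Real.sqrt 2 =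
      (1 / 2) * Real.sqrt (12 * Real.pi * x) := by
  rw [mul_assoc, ← Real.sqrt_mul (by positivity), mul_div_assoc,
    ← Real.sqrt_div (by positivity)]
  congr 2
  ring

set_option maxHeartbeats 1000000 in
/-- Numerical evaluation of the constant `C = K(2)/√2 ≈ 7.3459` from Theorem A. -/
theorem main_constant_bounds :
    7.345 < ((1 / 2) * Real.sqrt (24 * Real.pi) *
        Real.sqrt ((3 / Real.pi) * (Real.cosh (Real.log 3 / 4)) ^ 6 /
            ((Real.cosh (Real.log 3 / 4)) ^ 6 - 1) *
          (Real.log 3 / 2) * Real.arccos (-(Real.sinh (Real.log 3 / 2))))) / Real.sqrt 2 ∧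
      ((1 / 2) * Real.sqrt (24 * Real.pi) *
        Real.sqrt ((3 / Real.pi) * (Real.cosh (Real.log 3 / 4)) ^ 6 /
            ((Real.cosh (Real.log 3 / 4)) ^ 6 - 1) *
          (Real.log 3 / 2) * Real.arccos (-(Real.sinh (Real.log 3 / 2))))) / Real.sqrt 2
        < 7.346 := by
  obtain ⟨hs1, hs2⟩ := sqrt3_bounds
  have hs0 : (0:ℝ) < Real.sqrt 3 := by linarith
  have hsq3 : Real.sqrt 3 ^ 2 = 3 := Real.sq_sqrt (by norm_num)
  -- exp (log 3 / 2) = √3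
  have hsq : Real.exp (Real.log 3 / 2) ^ 2 = 3 := by
    rw [sq, ← Real.exp_add, add_halves, Real.exp_log (by norm_num : (0:ℝ) < 3)]
  have hexp2 : Real.exp (Real.log 3 / 2) = Real.sqrt 3 := by
    have h := Real.sqrt_sq (Real.exp_pos (Real.log 3 / 2)).le
    rw [hsq] at h
    exact h.symm
  have hexp4 : Real.exp (Real.log 3 / 4) ^ 2 = Real.sqrt 3 := by
    rw [sq, ← Real.exp_add, show Real.log 3 / 4 + Real.log 3 / 4 = Real.log 3 / 2 by ring,
      hexp2]
  have hmul3 : Real.sqrt 3 * Real.sqrt 3 = 3 := by linear_combination hsq3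
  have hinv : (Real.sqrt 3)⁻¹ = Real.sqrt 3 / 3 := by
    rw [eq_div_iff (by norm_num : (3:ℝ) ≠ 0), inv_mul_eq_div, div_eq_iff hs0.ne']
    linarith [hmul3]
  -- sinh (log 3 / 2) = (√3)⁻¹
  have hsinh : Real.sinh (Real.log 3 / 2) = (Real.sqrt 3)⁻¹ := by
    rw [Real.sinh_eq, Real.exp_neg, hexp2, hinv]
    ring
  -- cosh (log 3 / 4) ^ 6 = 5/8 + 13√3/36
  have hu0 : (0:ℝ) < Real.exp (Real.log 3 / 4) := Real.exp_pos _
  have hcosh2 : Real.cosh (Real.log 3 / 4) ^ 2 = 1 / 2 + Real.sqrt 3 / 3 := by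
    rw [Real.cosh_eq, Real.exp_neg]
    rw [show ((Real.exp (Real.log 3 / 4) + (Real.exp (Real.log 3 / 4))⁻¹) / 2) ^ 2 =
      (Real.exp (Real.log 3 / 4) ^ 2 + ((Real.exp (Real.log 3 / 4))⁻¹) ^ 2 +
        2 * (Real.exp (Real.log 3 / 4) * (Real.exp (Real.log 3 / 4))⁻¹)) / 4 by ring,
      mul_inv_cancel₀ hu0.ne', inv_pow, hexp4, hinv]
    ring
  have hcosh6 : Real.cosh (Real.log 3 / 4) ^ 6 = 5 / 8 + 13 * Real.sqrt 3 / 36 := by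
    rw [show Real.cosh (Real.log 3 / 4) ^ 6 = (Real.cosh (Real.log 3 / 4) ^ 2) ^ 3 by ring,
      hcosh2]
    linear_combination (1 / 6 + Real.sqrt 3 / 27) * hsq3
  rw [hsinh, hcosh6]
  set th := Real.arccos (-(Real.sqrt 3)⁻¹) with hthdef
  have hth1 : 2.18620 < th := theta_lb
  have hth2 : th < 2.18632 := theta_ub
  have hL1 : 1.098612 < Real.log 3 := log3_lb
  have hL2 : Real.log 3 < 1.098613 := log3_ub
  have hπ0 : (0:ℝ) < Real.pi := Real.pi_pos
  have hA1 : (0:ℝ) < 5 / 8 + 13 * Real.sqrt 3 / 36 - 1 := by nlinarith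
  have hX0 : (0:ℝ) ≤ 3 / Real.pi * (5 / 8 + 13 * Real.sqrt 3 / 36) /
      (5 / 8 + 13 * Real.sqrt 3 / 36 - 1) * (Real.log 3 / 2) * th := by
    apply mul_nonneg (mul_nonneg _ (by linarith : (0:ℝ) ≤ Real.log 3 / 2)) (by linarith)
    apply div_nonneg _ hA1.le
    apply mul_nonneg (by positivity)
    nlinarith
  rw [combine_sqrt _ hX0]
  have hcancel : Real.pi * Real.pi⁻¹ = 1 := mul_inv_cancel₀ hπ0.ne'
  have harg : 12 * Real.pi * (3 / Real.pi * (5 / 8 + 13 * Real.sqrt 3 / 36) /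
      (5 / 8 + 13 * Real.sqrt 3 / 36 - 1) * (Real.log 3 / 2) * th) =
      18 * ((5 / 8 + 13 * Real.sqrt 3 / 36) / (5 / 8 + 13 * Real.sqrt 3 / 36 - 1)) *
        Real.log 3 * th := by
    rw [show 12 * Real.pi * (3 / Real.pi * (5 / 8 + 13 * Real.sqrt 3 / 36) /
        (5 / 8 + 13 * Real.sqrt 3 / 36 - 1) * (Real.log 3 / 2) * th) =
        (Real.pi * Real.pi⁻¹) * (18 * ((5 / 8 + 13 * Real.sqrt 3 / 36) /
          (5 / 8 + 13 * Real.sqrt 3 / 36 - 1)) * Real.log 3 * th) from by ring,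
      hcancel, one_mul]
  rw [harg]
  have hR1 : (5 / 8 + 13 * Real.sqrt 3 / 36) / (5 / 8 + 13 * Real.sqrt 3 / 36 - 1) <
      4.9926095 := by
    rw [div_lt_iff₀ hA1]; linarith
  have hR2 : (4.9926080:ℝ) <
      (5 / 8 + 13 * Real.sqrt 3 / 36) / (5 / 8 + 13 * Real.sqrt 3 / 36 - 1) := by
    rw [lt_div_iff₀ hA1]; linarith
  set R := (5 / 8 + 13 * Real.sqrt 3 / 36) / (5 / 8 + 13 * Real.sqrt 3 / 36 - 1) with hRdef
  have hR0 : (0:ℝ) < R := by linarith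
  have hL0 : (0:ℝ) < Real.log 3 := by linarith
  have hth0 : (0:ℝ) < th := by linarith
  have hRL1 : R * Real.log 3 < 4.9926095 * 1.098613 := by nlinarith
  have hRL2 : (4.9926080:ℝ) * 1.098612 < R * Real.log 3 := by nlinarith
  have hY1 : (14.69:ℝ) ^ 2 < 18 * R * Real.log 3 * th := by nlinarith
  have hY2 : 18 * R * Real.log 3 * th < (14.692:ℝ) ^ 2 := by nlinarith
  have hYnn : (0:ℝ) ≤ 18 * R * Real.log 3 * th := by positivity
  constructor
  · have h := (Real.lt_sqrt (by norm_num : (0:ℝ) ≤ 14.69)).2 hY1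
    linarith
  · have h := (Real.sqrt_lt' (by norm_num : (0:ℝ) < 14.692)).2 hY2
    linarith
end
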